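/- Let X and Y be injective metric spaces, let R ⊆ X × Y be a relation with α := dis(R)/2 < ∞ such that π_X(R) spans X, and let x̄ ∈ X. Then there exists a pair (x₀, y₀) ∈ X × Y such that d(x̄, x₀) ≤ α and dis(R ∪ {(x₀, y₀)}) = dis(R). -/

import Mathlib

open Metric Set
open scoped ENNReal

/-- The distortion of a relation `R ⊆ X × Y`:
`dis R = sup { |d(x,x') − d(y,y')| : (x,y), (x',y') ∈ R }` (in `ℝ≥0∞`). -/
noncomputable def relDistortion {X Y : Type} [MetricSpace X] [MetricSpace Y]
    (R : Set (X × Y)) : ℝ≥0∞ :=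
  ⨆ p ∈ R, ⨆ q ∈ R, ENNReal.ofReal |dist p.1 q.1 - dist p.2 q.2|

/-- `A` spans `X`: for all `x x'`, `d(x,x') = sup_{a ∈ A} (d(x,a) − d(x',a))`. -/
def Spans {X : Type} [MetricSpace X] (A : Set X) : Prop :=
  ∀ x x' : X, IsLUB ((fun a => dist x a - dist x' a) '' A) (dist x x')

/-- A metric space `Y` is injective: for every metric space `B`, every subset `A ⊆ B`
and every 1-Lipschitz map `f : A → Y` there is a 1-Lipschitz map `g : B → Y`
extending `f`. -/
def IsInjectiveMS (Y : Type) [MetricSpace Y] : Prop :=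
  ∀ (B : Type) [MetricSpace B] (A : Set B) (f : A → Y),
    LipschitzWith 1 f → ∃ g : B → Y, LipschitzWith 1 g ∧ ∀ a : A, g a = f a


/-- Injectivity implies hyperconvexity: balls with pairwise-compatible radii intersect. -/
theorem hyperconvex_of_injective {Y : Type} [MetricSpace Y] (hY : IsInjectiveMS Y)
    {ι : Type} [Nonempty ι] (c : ι → Y) (r : ι → ℝ) (hr : ∀ i, 0 ≤ r i)
    (h : ∀ i j, dist (c i) (c j) ≤ r i + r j) :
    ∃ y : Y, ∀ i, dist y (c i) ≤ r i := by
  set ρ : Y → ℝ := fun z => ⨅ i, (r i + dist z (c i)) with hρdef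
  have hbdd : ∀ z : Y, BddBelow (Set.range fun i => r i + dist z (c i)) := by
    intro z
    refine ⟨0, ?_⟩
    rintro _ ⟨i, rfl⟩
    have h1 := hr i
    have h2 := dist_nonneg (x := z) (y := c i)
    dsimp only
    linarith
  have hρ_le : ∀ z i, ρ z ≤ r i + dist z (c i) := fun z i => ciInf_le (hbdd z) i
  by_cases h0 : ∃ z, ρ z ≤ 0
  · obtain ⟨z, hz⟩ := h0
    refine ⟨z, fun j => ?_⟩
    refine le_of_forall_pos_le_add fun ε hε => ?_
    obtain ⟨i, hi⟩ := exists_lt_of_ciInf_lt (show ρ z < ε by linarith)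
    have h1 := h i j
    have h2 := dist_triangle z (c i) (c j)
    linarith
  · push_neg at h0
    have hlip : ∀ z z' : Y, ρ z ≤ ρ z' + dist z z' := by
      intro z z'
      have key : ∀ i, ρ z - dist z z' ≤ r i + dist z' (c i) := by
        intro i
        have h1 := hρ_le z i
        have h2 := dist_triangle z z' (c i)
        linarith
      have := le_ciInf key
      linarith
    have hsum : ∀ z z' : Y, dist z z' ≤ ρ z + ρ z' := by
      intro z z'
      have key : ∀ j, dist z z' - ρ z ≤ r j + dist z' (c j) := by
        intro j
        have key2 : ∀ i, dist z z' - (r j + dist z' (c j)) ≤ r i + dist z (c i) := by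
          intro i
          have h1 := dist_triangle z (c i) (c j)
          have h2 := dist_triangle (c i) (c j) z'
          have h3 := h i j
          have h4 := dist_comm (c j) z'
          linarith [dist_triangle z (c j) z', dist_triangle z (c i) z',
            dist_comm z' (c j), dist_triangle (c i) z' (c j)]
        have := le_ciInf key2
        linarith
      have := le_ciInf key
      linarith
    classical
    letI : MetricSpace (Option Y) :=
      { dist := fun a b => match a, b with
          | none, none => 0
          | none, some y => ρ y
          | some y, none => ρ y
          | some y, some y' => dist y y'
        dist_self := by rintro (_ | y) <;> simp
        dist_comm := by rintro (_ | y) (_ | y') <;> simp [dist_comm]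
        dist_triangle := by
          rintro (_ | a) (_ | b) (_ | e)
          · show (0:ℝ) ≤ 0 + 0; norm_num
          · show ρ e ≤ 0 + ρ e; linarith
          · show (0:ℝ) ≤ ρ b + ρ b; linarith [h0 b]
          · show ρ e ≤ ρ b + dist b e
            have := hlip e b; have := dist_comm e b; linarith
          · show ρ a ≤ ρ a + 0; linarith
          · show dist a e ≤ ρ a + ρ e; exact hsum a e
          · show ρ a ≤ dist a b + ρ b; linarith [hlip a b]
          · exact dist_triangle a b e
        eq_of_dist_eq_zero := by
          rintro (_ | a) (_ | b) hab
          · rfl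
          · exact absurd (show ρ b = 0 from hab) (ne_of_gt (h0 b))
          · exact absurd (show ρ a = 0 from hab) (ne_of_gt (h0 a))
          · exact congrArg some (eq_of_dist_eq_zero (show dist a b = 0 from hab)) }
    set A : Set (Option Y) := Set.range some with hA
    have hmem : ∀ z : Y, some z ∈ A := fun z => ⟨z, rfl⟩
    set f : A → Y := fun a => a.1.getD (c (Classical.arbitrary ι)) with hf
    have hfval : ∀ (z : Y) (hz : some z ∈ A), f ⟨some z, hz⟩ = z := fun z hz => rfl
    have hflip : LipschitzWith 1 f := by
      apply LipschitzWith.of_dist_le_mul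
      rintro ⟨_, u, rfl⟩ ⟨_, v, rfl⟩
      rw [NNReal.coe_one, one_mul, Subtype.dist_eq]
      exact le_of_eq rfl
    obtain ⟨g, hg, hgf⟩ := hY (Option Y) A f hflip
    refine ⟨g none, fun i => ?_⟩
    have h1 : g (some (c i)) = c i := hgf ⟨some (c i), hmem (c i)⟩
    have h2 : dist (g none) (g (some (c i))) ≤ dist (none : Option Y) (some (c i)) := by
      simpa using hg.dist_le_mul none (some (c i))
    have h3 : dist (none : Option Y) (some (c i)) = ρ (c i) := rfl
    have h4 : ρ (c i) ≤ r i := by simpa using hρ_le (c i) i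
    rw [h1] at h2
    rw [h3] at h2
    linarith

/-- One-point extension step for relations between injective metric spaces. -/
theorem relDistortion_le_of_subset {X Y : Type} [MetricSpace X] [MetricSpace Y]
    {R S : Set (X × Y)} (h : R ⊆ S) : relDistortion R ≤ relDistortion S := by
  refine iSup₂_le fun p hp => iSup₂_le fun q hq => ?_
  exact le_iSup₂_of_le p (h hp) (le_iSup₂_of_le q (h hq) le_rfl)

theorem le_relDistortion {X Y : Type} [MetricSpace X] [MetricSpace Y]
    {R : Set (X × Y)} {p q : X × Y} (hp : p ∈ R) (hq : q ∈ R) :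
    ENNReal.ofReal |dist p.1 q.1 - dist p.2 q.2| ≤ relDistortion R :=
  le_iSup₂_of_le p hp (le_iSup₂_of_le q hq le_rfl)

theorem relation_one_point_extension_injective {X Y : Type} [MetricSpace X] [MetricSpace Y]
    (hX : IsInjectiveMS X) (hY : IsInjectiveMS Y)
    (R : Set (X × Y)) (hfin : relDistortion R < ⊤)
    (hspan : Spans (Prod.fst '' R)) (xbar : X) :
    ∃ (x₀ : X) (y₀ : Y), dist xbar x₀ ≤ (relDistortion R / 2).toReal ∧
      relDistortion (insert (x₀, y₀) R) = relDistortion R := by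
  classical
  set D : ℝ := (relDistortion R).toReal with hD
  have hD0 : 0 ≤ D := ENNReal.toReal_nonneg
  have hDhalf : (relDistortion R / 2).toReal = D / 2 := by
    rw [ENNReal.toReal_div]; norm_num; exact hD.symm
  have hpair : ∀ p ∈ R, ∀ q ∈ R, |dist p.1 q.1 - dist p.2 q.2| ≤ D := by
    intro p hp q hq
    have h1 := le_relDistortion hp hq
    have h2 := ENNReal.toReal_mono hfin.ne h1
    rwa [ENNReal.toReal_ofReal (abs_nonneg _)] at h2
  -- R is nonempty
  rcases R.eq_empty_or_nonempty with hR | hR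
  · exfalso
    have h1 := (hspan xbar xbar).2
    have h2 : (-1 : ℝ) ∈ upperBounds ((fun a => dist xbar a - dist xbar a) '' (Prod.fst '' R)) := by
      simp [hR]
    linarith [h1 h2, dist_self xbar]
  haveI : Nonempty ↥R := hR.to_subtype
  -- Step 1: find y₀
  obtain ⟨y₀, hy₀⟩ := hyperconvex_of_injective hY (ι := ↥R)
    (fun i => i.1.2) (fun i => dist xbar i.1.1 + D / 2)
    (fun i => by positivity)
    (by
      intro i j
      have h1 := hpair i.1 i.2 j.1 j.2
      have h2 := dist_triangle i.1.1 xbar j.1.1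
      have h3 := dist_comm i.1.1 xbar
      rw [abs_le] at h1
      linarith [h1.1, h1.2])
  -- lower bound from spanning
  have hlow : ∀ i : ↥R, dist xbar i.1.1 ≤ dist y₀ i.1.2 + 3 * (D / 2) := by
    intro i
    have hub : dist y₀ i.1.2 + 3 * (D / 2) ∈
        upperBounds ((fun a => dist i.1.1 a - dist xbar a) '' (Prod.fst '' R)) := by
      rintro _ ⟨_, ⟨p, hp, rfl⟩, rfl⟩
      have h1 := hpair i.1 i.2 p hp
      have h2 := hy₀ ⟨p, hp⟩
      have h3 := dist_triangle y₀ i.1.2 p.2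
      have h4 := dist_triangle i.1.2 y₀ p.2
      have h5 := dist_comm i.1.2 y₀
      rw [abs_le] at h1
      linarith [h1.1, h1.2]
    have := (hspan i.1.1 xbar).2 hub
    rwa [dist_comm xbar i.1.1]
  -- Step 2: find x₀
  obtain ⟨x₀, hx₀⟩ := hyperconvex_of_injective hX (ι := Option ↥R)
    (fun o => o.elim xbar (fun i => i.1.1))
    (fun o => o.elim (D / 2) (fun i => dist y₀ i.1.2 + D))
    (by rintro (_ | i) <;> simp <;> positivity)
    (by
      rintro (_ | i) (_ | j)
      · simp only [Option.elim]; rw [dist_self]; positivity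
      · simp only [Option.elim]; linarith [hlow j]
      · simp only [Option.elim]; linarith [hlow i, dist_comm i.1.1 xbar]
      · simp only [Option.elim]
        have h1 := hpair i.1 i.2 j.1 j.2
        have h2 := dist_triangle i.1.2 y₀ j.1.2
        have h3 := dist_comm i.1.2 y₀
        rw [abs_le] at h1
        linarith [h1.1, h1.2])
  have hx₀bar : dist x₀ xbar ≤ D / 2 := by simpa using hx₀ none
  have hx₀R : ∀ i : ↥R, dist x₀ i.1.1 ≤ dist y₀ i.1.2 + D := by
    intro i; simpa using hx₀ (some i)
  -- key estimate for the new pair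
  have hnew : ∀ p ∈ R, |dist x₀ p.1 - dist y₀ p.2| ≤ D := by
    intro p hp
    have h1 := hx₀R ⟨p, hp⟩
    have h2 := hy₀ ⟨p, hp⟩
    have h3 := dist_triangle xbar x₀ p.1
    have h4 := dist_comm xbar x₀
    rw [abs_le]
    constructor <;> simp only at h1 h2 <;> linarith
  refine ⟨x₀, y₀, by rw [hDhalf, dist_comm]; exact hx₀bar, le_antisymm ?_ (relDistortion_le_of_subset (subset_insert _ _))⟩
  have hDof : ENNReal.ofReal D = relDistortion R := ENNReal.ofReal_toReal hfin.ne
  have hbound : ∀ p ∈ insert (x₀, y₀) R, ∀ q ∈ insert (x₀, y₀) R,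
      ENNReal.ofReal |dist p.1 q.1 - dist p.2 q.2| ≤ relDistortion R := by
    rintro p (rfl | hp) q (rfl | hq)
    · simp
    · rw [← hDof]
      exact ENNReal.ofReal_le_ofReal (hnew q hq)
    · rw [← hDof]
      refine ENNReal.ofReal_le_ofReal ?_
      simpa [dist_comm] using hnew p hp
    · exact le_relDistortion hp hq
  exact iSup₂_le fun p hp => iSup₂_le fun q hq => hbound p hp q hq
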